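/- Let g be an irreducible monic integer polynomial with constant term ±1, no roots of absolute value 1, and whose roots generate a multiplicative group of rank 1. If λ and μ are two roots of g and e, f are nonzero integers with λ^e = μ^f, then e = ±f. -/

import Mathlib

open Polynomial

/-- Let `g` be an irreducible monic integer polynomial with constant term ±1
and no roots of absolute value 1, whose roots generate a multiplicative group of rank 1
(it contains an element of infinite order, and any two elements are ℤ-dependent). If `lam`
and `μ` are roots of `g` and `e, f` are nonzero integers with `lam ^ e = μ ^ f`, then
`e = ±f`. -/
theorem stmt9 (g : Polynomial ℤ) (hg : g.Monic)
    (hirr : Irreducible (g.map (Int.castRingHom ℚ)))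
    (hconst : g.coeff 0 = 1 ∨ g.coeff 0 = -1)
    (hhyp : ∀ z ∈ (g.map (Int.castRingHom ℂ)).roots, ‖z‖ ≠ 1)
    (hrank_ge : ∃ x : ℂˣ,
      x ∈ Subgroup.closure {u : ℂˣ | (u : ℂ) ∈ (g.map (Int.castRingHom ℂ)).roots} ∧
      ¬ IsOfFinOrder x)
    (hrank_le : ∀ x y : ℂˣ,
      x ∈ Subgroup.closure {u : ℂˣ | (u : ℂ) ∈ (g.map (Int.castRingHom ℂ)).roots} →
      y ∈ Subgroup.closure {u : ℂˣ | (u : ℂ) ∈ (g.map (Int.castRingHom ℂ)).roots} →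
      ∃ p q : ℤ, (p ≠ 0 ∨ q ≠ 0) ∧ x ^ p * y ^ q = 1)
    (lam μ : ℂ) (hlam : lam ∈ (g.map (Int.castRingHom ℂ)).roots)
    (hμ : μ ∈ (g.map (Int.castRingHom ℂ)).roots)
    (e f : ℤ) (he : e ≠ 0) (hf : f ≠ 0) (heq : lam ^ e = μ ^ f) :
    e = f ∨ e = -f := by
  classical
  -- the rational polynomial
  set p : ℚ[X] := g.map (Int.castRingHom ℚ) with hp
  have hpmonic : p.Monic := hg.map _
  -- the splitting field
  set K := p.SplittingField
  haveI : IsSplittingField ℚ K p := Polynomial.IsSplittingField.splittingField p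
  haveI : Normal ℚ K := Polynomial.SplittingField.instNormal p
  have hsplitsC : (p.map (algebraMap ℚ ℂ)).Splits := IsAlgClosed.splits _
  -- embedding of the splitting field into ℂ
  let ι : K →ₐ[ℚ] ℂ := IsSplittingField.lift K p hsplitsC
  set q : K[X] := p.map (algebraMap ℚ K) with hq
  have hqsplits : q.Splits := by
    rw [hq]
    exact IsSplittingField.splits K p
  -- the complex polynomial is q mapped through ι
  have step1 : g.map (Int.castRingHom ℂ) = p.map (algebraMap ℚ ℂ) := by
    rw [hp, map_map]
    congr 1
  have step2 : p.map (algebraMap ℚ ℂ) = q.map (ι : K →+* ℂ) := by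
    rw [hq, Polynomial.map_map (algebraMap ℚ K) (ι : K →+* ℂ) p, ι.comp_algebraMap]
  have hmap : g.map (Int.castRingHom ℂ) = q.map (ι : K →+* ℂ) := step1.trans step2
  have hroots : (g.map (Int.castRingHom ℂ)).roots = q.roots.map ι := by
    rw [hmap, hqsplits.roots_map]
    rfl
  -- get preimages of lam and μ in K
  rw [hroots, Multiset.mem_map] at hlam hμ
  obtain ⟨lam₀, hlam₀, rfl⟩ := hlam
  obtain ⟨μ₀, hμ₀, rfl⟩ := hμ
  have hinj : Function.Injective ι := ι.toRingHom.injective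
  -- facts about roots of q
  have hqne : q ≠ 0 := (hpmonic.map (algebraMap ℚ K)).ne_zero
  have haeval : ∀ x : K, x ∈ q.roots → Polynomial.aeval x p = 0 := by
    intro x hx
    have := isRoot_of_mem_roots hx
    rwa [hq, IsRoot, eval_map, ← aeval_def] at this
  have hmem : ∀ x : K, Polynomial.aeval x p = 0 → x ∈ q.roots := by
    intro x hx
    rw [mem_roots hqne, IsRoot, hq, eval_map, ← aeval_def]
    exact hx
  -- roots are nonzero
  have hne0 : ∀ x : K, x ∈ q.roots → ι x ≠ 0 := by
    intro x hx h0
    have hmemC : (0 : ℂ) ∈ (g.map (Int.castRingHom ℂ)).roots := by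
      rw [hroots, Multiset.mem_map]; exact ⟨x, hx, h0⟩
    have := isRoot_of_mem_roots hmemC
    rw [IsRoot, eval_map, eval₂_at_zero] at this
    rcases hconst with h | h <;> simp [h] at this
  -- roots have absolute value ≠ 1
  have habs : ∀ x : K, x ∈ q.roots → ‖ι x‖ ≠ 1 := by
    intro x hx
    apply hhyp
    rw [hroots, Multiset.mem_map]
    exact ⟨x, hx, rfl⟩
  -- minimal polynomials agree, produce σ
  have hminlam : minpoly ℚ lam₀ = p :=
    (minpoly.eq_of_irreducible_of_monic hirr (haeval _ hlam₀) hpmonic).symm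
  have hminμ : minpoly ℚ μ₀ = p :=
    (minpoly.eq_of_irreducible_of_monic hirr (haeval _ hμ₀) hpmonic).symm
  obtain ⟨σ, hσ0⟩ : μ₀ ∈ MulAction.orbit (K ≃ₐ[ℚ] K) lam₀ :=
    (Normal.minpoly_eq_iff_mem_orbit (F := ℚ) (E := K)).mp (hminμ.trans hminlam.symm)
  have hσ : σ lam₀ = μ₀ := hσ0
  -- the orbit sequence
  set ρ : ℕ → K := fun k => (σ ^ k) lam₀ with hρ
  have hρ0 : ρ 0 = lam₀ := by simp [hρ]
  have hρsucc : ∀ k, ρ (k + 1) = σ (ρ k) := by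
    intro k
    simp only [hρ, pow_succ', AlgEquiv.mul_apply]
  -- each ρ k is a root of q
  have hρroot : ∀ k, ρ k ∈ q.roots := by
    intro k
    induction k with
    | zero => rw [hρ0]; exact hlam₀
    | succ k ih =>
      rw [hρsucc]
      apply hmem
      rw [show σ (ρ k) = σ.toAlgHom (ρ k) from rfl,
        Polynomial.aeval_algHom_apply σ.toAlgHom (ρ k) p, haeval _ ih, map_zero]
  -- base relation in K
  have hbase : lam₀ ^ e = μ₀ ^ f := by
    apply hinj
    rw [map_zpow₀, map_zpow₀]
    exact heq
  -- relation propagates along the orbit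
  have hrel : ∀ k, ρ k ^ e = ρ (k + 1) ^ f := by
    intro k
    induction k with
    | zero => rw [hρ0, hρsucc, hρ0, hσ]; exact hbase
    | succ k ih =>
      rw [hρsucc, ← map_zpow₀ σ, ih, hρsucc (k + 1), ← map_zpow₀ σ]
  -- logs of absolute values
  set L : ℕ → ℝ := fun k => Real.log (‖ι (ρ k)‖) with hL
  have hLne : ∀ k, L k ≠ 0 := by
    intro k
    have h0 : ι (ρ k) ≠ 0 := hne0 _ (hρroot k)
    have h1 : ‖ι (ρ k)‖ ≠ 1 := habs _ (hρroot k)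
    have hpos : 0 < ‖ι (ρ k)‖ := norm_pos_iff.mpr h0
    simp only [hL]
    exact Real.log_ne_zero_of_pos_of_ne_one hpos h1
  have hLrel : ∀ k, (e : ℝ) * L k = (f : ℝ) * L (k + 1) := by
    intro k
    have := congrArg (fun x : K => ‖ι x‖) (hrel k)
    simp only [map_zpow₀, norm_zpow] at this
    have := congrArg Real.log this
    rwa [Real.log_zpow, Real.log_zpow] at this
  -- iterate the relation
  have hiter : ∀ j k, (e : ℝ) ^ j * L k = (f : ℝ) ^ j * L (k + j) := by
    intro j
    induction j with
    | zero => simp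
    | succ j ih =>
      intro k
      have h1 := ih (k + 1)
      calc (e : ℝ) ^ (j + 1) * L k = (e : ℝ) ^ j * ((e : ℝ) * L k) := by ring
        _ = (e : ℝ) ^ j * ((f : ℝ) * L (k + 1)) := by rw [hLrel k]
        _ = (f : ℝ) * ((e : ℝ) ^ j * L (k + 1)) := by ring
        _ = (f : ℝ) * ((f : ℝ) ^ j * L (k + 1 + j)) := by rw [h1]
        _ = (f : ℝ) ^ (j + 1) * L (k + (j + 1)) := by ring_nf
  -- pigeonhole: the orbit sequence repeats
  have hfin : ∃ k l : ℕ, k ≠ l ∧ ρ k = ρ l := by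
    obtain ⟨k, l, hkl, hne⟩ := Finite.exists_ne_map_eq_of_infinite fun k : ℕ =>
      (⟨ρ k, Multiset.mem_toFinset.mpr (hρroot k)⟩ : {x // x ∈ q.roots.toFinset})
    exact ⟨k, l, hkl, by simpa using congrArg Subtype.val hne⟩
  obtain ⟨k, l, hkl, hρeq⟩ := hfin
  -- WLOG k < l
  wlog hlt : k < l generalizing k l
  · exact this l k hkl.symm hρeq.symm (by omega)
  -- conclude (e : ℝ)^(l-k) = (f : ℝ)^(l-k)
  have hj : l - k ≠ 0 := by omega
  have hkey : (e : ℝ) ^ (l - k) = (f : ℝ) ^ (l - k) := by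
    have h1 := hiter (l - k) k
    have h2 : k + (l - k) = l := by omega
    rw [h2] at h1
    have h3 : L l = L k := by simp only [hL, hρeq]
    rw [h3] at h1
    exact mul_right_cancel₀ (hLne k) h1
  -- conclude |e| = |f|
  have habs' : |(e : ℝ)| = |(f : ℝ)| := by
    have := congrArg abs hkey
    rw [abs_pow, abs_pow] at this
    exact (pow_left_inj₀ (abs_nonneg _) (abs_nonneg _) hj).mp this
  rcases abs_eq_abs.mp habs' with h | h
  · left; exact_mod_cast h
  · right
    have : (e : ℝ) = ((-f : ℤ) : ℝ) := by push_cast; linarith [h]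
    exact_mod_cast this
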